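/- Let n ≥ 3 and let D_{2n} be the dihedral group of order 2n with cyclic subgroup ⟨a⟩ ≅ Z_n. Then the number of twin classes of the power graph P_{D_{2n}} equals the number of twin classes of the power graph P_{Z_n} plus 2, i.e., |U(P_{D_{2n}})| = |U(P_{Z_n})| + 2. -/

import Mathlib

open SimpleGraph

/-- `W` is a resolving set for the graph `Γ`: any two distinct vertices are
distinguished by their distance to some element of `W`. -/
def IsResolvingSet {V : Type*} (Γ : SimpleGraph V) (W : Set V) : Prop :=
  ∀ u v : V, u ≠ v → ∃ w ∈ W, Γ.dist u w ≠ Γ.dist v w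

/-- The metric dimension of a graph: the least cardinality of a resolving set. -/
noncomputable def metricDim {V : Type*} (Γ : SimpleGraph V) : ℕ :=
  sInf {n | ∃ W : Set V, W.Finite ∧ W.ncard = n ∧ IsResolvingSet Γ W}

/-- A minimal resolving set: a resolving set no proper subset of which resolves. -/
def IsMinimalResolvingSet {V : Type*} (Γ : SimpleGraph V) (W : Set V) : Prop :=
  IsResolvingSet Γ W ∧ ∀ W' : Set V, W' ⊂ W → ¬ IsResolvingSet Γ W'

/-- Two vertices are twins if they have the same open neighborhood or the same
closed neighborhood. -/
def AreTwins {V : Type*} (Γ : SimpleGraph V) (u v : V) : Prop :=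
  Γ.neighborSet u = Γ.neighborSet v ∨
    insert u (Γ.neighborSet u) = insert v (Γ.neighborSet v)

/-- The twin class of a vertex. -/
def twinClass {V : Type*} (Γ : SimpleGraph V) (u : V) : Set V :=
  {v | AreTwins Γ u v}

/-- The number of twin classes of a graph. -/
noncomputable def twinClassCount {V : Type*} (Γ : SimpleGraph V) : ℕ :=
  {S : Set V | ∃ u : V, S = twinClass Γ u}.ncard

/-- Resolving sets of `Γ` have the exchange property. -/
def HasExchangeProperty {V : Type*} (Γ : SimpleGraph V) : Prop :=
  ∀ W₁ W₂ : Set V, IsMinimalResolvingSet Γ W₁ → IsMinimalResolvingSet Γ W₂ →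
    ∀ u ∈ W₁, ∃ v ∈ W₂, IsMinimalResolvingSet Γ ((W₁ \ {u}) ∪ {v})

/-- The (undirected) power graph of a group `G`: distinct `x`, `y` are adjacent
iff one is a positive power of the other. -/
def powerGraph (G : Type*) [Group G] : SimpleGraph G :=
  SimpleGraph.fromRel (fun x y => ∃ m : ℕ, 0 < m ∧ y = x ^ m)

/-- `R{x,y}`: the set of vertices having different distances to `x` and `y`. -/
def Rset {V : Type*} (Γ : SimpleGraph V) (x y : V) : Set V :=
  {z | Γ.dist x z ≠ Γ.dist y z}

section TwinBasics
variable {V : Type*} {Γ : SimpleGraph V}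

lemma areTwins_refl (u : V) : AreTwins Γ u u := Or.inl rfl

lemma areTwins_symm {u v : V} (h : AreTwins Γ u v) : AreTwins Γ v u :=
  h.imp Eq.symm Eq.symm

private lemma areTwins_aux {u v w : V} (h1 : Γ.neighborSet u = Γ.neighborSet v)
    (h2 : insert v (Γ.neighborSet v) = insert w (Γ.neighborSet w)) : AreTwins Γ u w := by
  by_cases huv : u = v
  · subst huv; exact Or.inr h2
  by_cases hvw : v = w
  · subst hvw; exact Or.inl h1
  exfalso
  have hw : w ∈ Γ.neighborSet u := by
    have : w ∈ insert v (Γ.neighborSet v) := h2.symm ▸ Set.mem_insert _ _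
    rw [h1]
    rcases this with h | h
    · exact absurd h.symm hvw
    · exact h
  have hu : u ∈ insert v (Γ.neighborSet v) := by
    rw [h2]
    exact Set.mem_insert_iff.2 (Or.inr ((Γ.mem_neighborSet _ _).2 ((Γ.mem_neighborSet _ _).1 hw).symm))
  rcases hu with h | h
  · exact huv h
  · rw [← h1] at h
    exact Γ.irrefl ((Γ.mem_neighborSet _ _).1 h)

lemma areTwins_trans {u v w : V} (h1 : AreTwins Γ u v) (h2 : AreTwins Γ v w) :
    AreTwins Γ u w := by
  rcases h1 with h1 | h1 <;> rcases h2 with h2 | h2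
  · exact Or.inl (h1.trans h2)
  · exact areTwins_aux h1 h2
  · exact areTwins_symm (areTwins_aux h2.symm h1.symm)
  · exact Or.inr (h1.trans h2)

lemma mem_twinClass_self (u : V) : u ∈ twinClass Γ u := areTwins_refl u

lemma twinClass_eq_of_mem {u v : V} (h : v ∈ twinClass Γ u) :
    twinClass Γ u = twinClass Γ v := by
  ext w
  exact ⟨fun hw => areTwins_trans (areTwins_symm h) hw, fun hw => areTwins_trans h hw⟩

end TwinBasics

section PowerGraph

lemma powerGraph_adj {G : Type*} [Group G] {x y : G} :
    (powerGraph G).Adj x y ↔ x ≠ y ∧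
      ((∃ m : ℕ, 0 < m ∧ y = x ^ m) ∨ (∃ m : ℕ, 0 < m ∧ x = y ^ m)) := by
  simp [powerGraph, SimpleGraph.fromRel_adj]

lemma powerGraph_adj_one {G : Type*} [Group G] [Finite G] {y : G} (h : y ≠ 1) :
    (powerGraph G).Adj 1 y := by
  rw [powerGraph_adj]
  exact ⟨fun e => h e.symm, Or.inr ⟨orderOf y, orderOf_pos y, (pow_orderOf_eq_one y).symm⟩⟩

lemma neighborSet_one {G : Type*} [Group G] [Finite G] :
    (powerGraph G).neighborSet 1 = {1}ᶜ := by
  ext y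
  simp only [mem_neighborSet, Set.mem_compl_iff, Set.mem_singleton_iff]
  constructor
  · intro h; exact fun e => (powerGraph G).irrefl (e ▸ h)
  · exact fun h => powerGraph_adj_one h

end PowerGraph

section Dihedral
open DihedralGroup Multiplicative

lemma r_pow {n : ℕ} (i : ZMod n) (m : ℕ) : (r i : DihedralGroup n) ^ m = r (m • i) := by
  induction m with
  | zero => rw [pow_zero, zero_nsmul, one_def]
  | succ k ih => rw [pow_succ, ih, r_mul_r, succ_nsmul]

lemma sr_pow {n : ℕ} (i : ZMod n) (m : ℕ) :
    (sr i : DihedralGroup n) ^ m = 1 ∨ (sr i : DihedralGroup n) ^ m = sr i := by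
  rw [← pow_mod_orderOf, orderOf_sr]
  rcases Nat.mod_two_eq_zero_or_one m with h | h <;> rw [h]
  · exact Or.inl (pow_zero _)
  · exact Or.inr (pow_one _)

variable {n : ℕ}


/-- the embedding of the cyclic part -/
def iota (n : ℕ) (x : Multiplicative (ZMod n)) : DihedralGroup n := r (toAdd x)

lemma iota_injective : Function.Injective (iota n) := by
  intro x y h
  simpa [iota, DihedralGroup.r.injEq] using h

lemma adj_r_r {i j : ZMod n} :
    (powerGraph (DihedralGroup n)).Adj (r i) (r j) ↔ (powerGraph (Multiplicative (ZMod n))).Adj (ofAdd i) (ofAdd j) := by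
  rw [powerGraph_adj, powerGraph_adj]
  constructor
  · rintro ⟨hne, h⟩
    refine ⟨by simpa using fun e => hne (by rw [e]), ?_⟩
    rcases h with ⟨m, hm, he⟩ | ⟨m, hm, he⟩
    · rw [_root_.r_pow] at he
      exact Or.inl ⟨m, hm, by simpa [← ofAdd_nsmul] using congrArg ofAdd (r.inj he)⟩
    · rw [_root_.r_pow] at he
      exact Or.inr ⟨m, hm, by simpa [← ofAdd_nsmul] using congrArg ofAdd (r.inj he)⟩
  · rintro ⟨hne, h⟩
    refine ⟨by simpa using fun e : i = j => hne (by rw [e]), ?_⟩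
    rcases h with ⟨m, hm, he⟩ | ⟨m, hm, he⟩
    · rw [← ofAdd_nsmul] at he
      exact Or.inl ⟨m, hm, by rw [_root_.r_pow]; exact congrArg r (by simpa using he)⟩
    · rw [← ofAdd_nsmul] at he
      exact Or.inr ⟨m, hm, by rw [_root_.r_pow]; exact congrArg r (by simpa using he)⟩

lemma not_adj_r_sr {i j : ZMod n} (hi : i ≠ 0) : ¬ (powerGraph (DihedralGroup n)).Adj (r i) (sr j) := by
  rw [powerGraph_adj]
  rintro ⟨-, ⟨m, -, he⟩ | ⟨m, -, he⟩⟩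
  · rw [_root_.r_pow] at he; cases he
  · rcases sr_pow j m with h | h <;> rw [h] at he
    · rw [one_def] at he; exact hi (r.inj he)
    · cases he

lemma neighborSet_sr (j : ZMod n) : (powerGraph (DihedralGroup n)).neighborSet (sr j) = {1} := by
  ext y
  simp only [mem_neighborSet, Set.mem_singleton_iff]
  constructor
  · intro h
    rw [powerGraph_adj] at h
    rcases h with ⟨hne, ⟨m, -, he⟩ | ⟨m, hm, he⟩⟩
    · rcases sr_pow j m with h | h <;> rw [h] at he
      · exact he
      · exact absurd he.symm hne
    · cases y with
      | r k =>
        rw [_root_.r_pow] at he; cases he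
      | sr k =>
        rcases sr_pow k m with h | h <;> rw [h] at he
        · rw [one_def] at he; cases he
        · exact absurd he hne
  · rintro rfl
    rw [powerGraph_adj]
    refine ⟨by rw [one_def]; exact fun h => (by cases h),
      Or.inl ⟨2, by norm_num, by rw [pow_two, sr_mul_self]⟩⟩

lemma neighborSet_r_eq {i : ZMod n} (hi : i ≠ 0) :
    (powerGraph (DihedralGroup n)).neighborSet (r i) = iota n '' ((powerGraph (Multiplicative (ZMod n))).neighborSet (ofAdd i)) := by
  ext y
  simp only [mem_neighborSet, Set.mem_image]
  constructor
  · intro h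
    cases y with
    | r j =>
      exact ⟨ofAdd j, adj_r_r.1 h, rfl⟩
    | sr j => exact absurd h (not_adj_r_sr hi)
  · rintro ⟨x, hx, rfl⟩
    exact adj_r_r.2 (by simpa using hx)

lemma areTwins_r_r {i j : ZMod n} (hi : i ≠ 0) (hj : j ≠ 0) :
    AreTwins (powerGraph (DihedralGroup n)) (r i) (r j) ↔ AreTwins (powerGraph (Multiplicative (ZMod n))) (ofAdd i) (ofAdd j) := by
  unfold AreTwins
  rw [neighborSet_r_eq hi, neighborSet_r_eq hj]
  have h1 : (r i : DihedralGroup n) = iota n (ofAdd i) := rfl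
  have h2 : (r j : DihedralGroup n) = iota n (ofAdd j) := rfl
  rw [h1, h2, ← Set.image_insert_eq, ← Set.image_insert_eq,
    Set.image_eq_image iota_injective, Set.image_eq_image iota_injective]

end Dihedral

section Main
open DihedralGroup Multiplicative

variable {n : ℕ} [NeZero n]


lemma one_ne_zero_zmod (hn : 3 ≤ n) : (1 : ZMod n) ≠ 0 := by
  haveI : Fact (1 < n) := ⟨by omega⟩
  exact one_ne_zero

lemma two_ne_zero_zmod (hn : 3 ≤ n) : (2 : ZMod n) ≠ 0 := by
  intro h
  have := congrArg ZMod.val h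
  rw [show ((2 : ZMod n)) = ((2 : ℕ) : ZMod n) by push_cast; ring,
    ZMod.val_natCast_of_lt (by omega), ZMod.val_zero] at this
  omega

lemma two_ne_one_zmod (hn : 3 ≤ n) : (2 : ZMod n) ≠ 1 := by
  intro h
  haveI : Fact (1 < n) := ⟨by omega⟩
  have := congrArg ZMod.val h
  rw [show ((2 : ZMod n)) = ((2 : ℕ) : ZMod n) by push_cast; ring,
    ZMod.val_natCast_of_lt (by omega), ZMod.val_one] at this
  omega

lemma r_one_ne_one (hn : 3 ≤ n) : (r 1 : DihedralGroup n) ≠ 1 := by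
  rw [one_def]
  intro h
  exact one_ne_zero_zmod hn (r.inj h)

lemma twinClass_one_dihedral (hn : 3 ≤ n) : twinClass (powerGraph (DihedralGroup n)) 1 = {1} := by
  ext y
  simp only [twinClass, Set.mem_setOf_eq, Set.mem_singleton_iff]
  constructor
  · rintro (h | h)
    · rw [neighborSet_one] at h
      by_contra hy
      have : y ∈ (powerGraph (DihedralGroup n)).neighborSet y := by rw [← h]; exact hy
      exact (powerGraph (DihedralGroup n)).irrefl
        (((powerGraph (DihedralGroup n)).mem_neighborSet _ _).1 this)
    · rw [neighborSet_one] at h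
      have huniv : insert (1 : DihedralGroup n) {1}ᶜ = Set.univ := by
        ext z; by_cases hz : z = 1 <;> simp [hz]
      rw [huniv] at h
      have hsr : (sr 0 : DihedralGroup n) ∈ insert y ((powerGraph (DihedralGroup n)).neighborSet y) := by
        rw [← h]; exact Set.mem_univ _
      rw [Set.mem_insert_iff] at hsr
      rcases hsr with hs | hs
      · subst hs
        have : (r 1 : DihedralGroup n) ∈ insert (sr (0 : ZMod n))
            ((powerGraph (DihedralGroup n)).neighborSet (sr 0)) := by
          rw [← h]; exact Set.mem_univ _
        rw [neighborSet_sr, Set.mem_insert_iff] at this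
        rcases this with h' | h'
        · cases h'
        · rw [Set.mem_singleton_iff] at h'
          exact absurd h' (r_one_ne_one hn)
      · have : y ∈ (powerGraph (DihedralGroup n)).neighborSet (sr 0) :=
          (((powerGraph (DihedralGroup n)).mem_neighborSet _ _).2
            (((powerGraph (DihedralGroup n)).mem_neighborSet _ _).1 hs).symm)
        rw [neighborSet_sr] at this
        exact this
  · rintro rfl; exact areTwins_refl 1


lemma exists_neighbor_ne_one (hn : 3 ≤ n) {i : ZMod n} (hi : i ≠ 0) :
    ∃ k : ZMod n, k ≠ 0 ∧ (r k : DihedralGroup n) ∈ (powerGraph (DihedralGroup n)).neighborSet (r i) := by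
  by_cases h1 : i = 1
  · subst h1
    refine ⟨2, two_ne_zero_zmod hn, ?_⟩
    rw [SimpleGraph.mem_neighborSet, powerGraph_adj]
    refine ⟨fun h => two_ne_one_zmod hn (r.inj h).symm, Or.inl ⟨2, by norm_num, ?_⟩⟩
    rw [_root_.r_pow]
    congr 1
    push_cast
    ring
  · refine ⟨1, one_ne_zero_zmod hn, ?_⟩
    rw [SimpleGraph.mem_neighborSet, powerGraph_adj]
    refine ⟨fun h => h1 (r.inj h), Or.inr ⟨i.val, ZMod.val_pos.2 hi, ?_⟩⟩
    rw [_root_.r_pow]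
    congr 1
    rw [nsmul_eq_mul, mul_one]
    exact (ZMod.natCast_rightInverse i).symm

lemma twinClass_sr_dihedral (hn : 3 ≤ n) (j : ZMod n) :
    twinClass (powerGraph (DihedralGroup n)) (sr j) = {y | ∃ k, y = sr k} := by
  have huniv : insert (1 : DihedralGroup n) ({1}ᶜ : Set (DihedralGroup n)) = Set.univ := by
    ext z; by_cases hz : z = 1 <;> simp [hz]
  ext y
  simp only [twinClass, Set.mem_setOf_eq]
  constructor
  · intro h
    cases y with
    | sr k => exact ⟨k, rfl⟩
    | r i =>
      exfalso
      rcases h with h | h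
      · rw [neighborSet_sr] at h
        by_cases hi : i = 0
        · subst hi
          rw [show (r (0 : ZMod n)) = (1 : DihedralGroup n) from one_def.symm,
            neighborSet_one] at h
          have : (1 : DihedralGroup n) ∈ ({1}ᶜ : Set (DihedralGroup n)) := by
            rw [← h]; exact Set.mem_singleton _
          exact this rfl
        · obtain ⟨k, hk0, hk⟩ := exists_neighbor_ne_one hn hi
          rw [← h, Set.mem_singleton_iff, one_def] at hk
          exact hk0 (r.inj hk)
      · rw [neighborSet_sr] at h
        by_cases hi : i = 0
        · subst hi
          rw [show (r (0 : ZMod n)) = (1 : DihedralGroup n) from one_def.symm,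
            neighborSet_one, huniv] at h
          have : (r 1 : DihedralGroup n) ∈ insert (sr j) ({1} : Set (DihedralGroup n)) := by
            rw [h]; exact Set.mem_univ _
          rcases this with h' | h'
          · cases h'
          · exact r_one_ne_one hn h'
        · have : (sr j : DihedralGroup n) ∈ insert (r i)
              ((powerGraph (DihedralGroup n)).neighborSet (r i)) := by
            rw [← h]; exact Set.mem_insert _ _
          rcases this with h' | h'
          · cases h'
          · exact not_adj_r_sr hi h'
  · rintro ⟨k, rfl⟩
    exact Or.inl (by rw [neighborSet_sr, neighborSet_sr])

lemma twinClass_r_dihedral (hn : 3 ≤ n) {i : ZMod n} (hi : i ≠ 0) :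
    twinClass (powerGraph (DihedralGroup n)) (r i) =
      iota n '' (twinClass (powerGraph (Multiplicative (ZMod n))) (ofAdd i) \ {1}) := by
  ext y
  simp only [twinClass, Set.mem_setOf_eq, Set.mem_image, Set.mem_diff,
    Set.mem_singleton_iff]
  constructor
  · intro h
    cases y with
    | sr k =>
      exfalso
      have : (r i : DihedralGroup n) ∈ twinClass (powerGraph (DihedralGroup n)) (sr k) :=
        areTwins_symm h
      rw [twinClass_sr_dihedral hn] at this
      obtain ⟨k', hk'⟩ := this
      cases hk'
    | r j =>
      by_cases hj : j = 0
      · exfalso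
        subst hj
        have : (r i : DihedralGroup n) ∈ twinClass (powerGraph (DihedralGroup n)) 1 := by
          rw [show (1 : DihedralGroup n) = r (0 : ZMod n) from one_def]
          exact areTwins_symm h
        rw [twinClass_one_dihedral hn, Set.mem_singleton_iff, one_def] at this
        exact hi (r.inj this)
      · refine ⟨ofAdd j, ⟨(areTwins_r_r hi hj).1 h, ?_⟩, rfl⟩
        simpa using hj
  · rintro ⟨x, ⟨hx, hx1⟩, rfl⟩
    have hj : toAdd x ≠ 0 := fun h => hx1 (by simpa using congrArg ofAdd h)
    have := (areTwins_r_r hi hj).2 (by simpa using hx)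
    exact this

lemma closed_univ_gen (hn : 3 ≤ n) :
    insert (ofAdd (1 : ZMod n))
      ((powerGraph (Multiplicative (ZMod n))).neighborSet (ofAdd (1 : ZMod n))) = Set.univ := by
  ext y
  simp only [Set.mem_insert_iff, SimpleGraph.mem_neighborSet, Set.mem_univ, iff_true]
  by_cases hy : y = ofAdd (1 : ZMod n)
  · exact Or.inl hy
  right
  by_cases hy1 : y = 1
  · subst hy1
    exact ((powerGraph _).adj_symm (powerGraph_adj_one (by
      simpa using one_ne_zero_zmod hn)))
  · rw [powerGraph_adj]
    refine ⟨fun h => hy h.symm, Or.inl ⟨(toAdd y).val, ZMod.val_pos.2 (fun h => hy1 (by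
      simpa using congrArg ofAdd h)), ?_⟩⟩
    rw [← ofAdd_nsmul]
    rw [show ((toAdd y).val • (1 : ZMod n)) = toAdd y by
      rw [nsmul_eq_mul, mul_one]; exact ZMod.natCast_rightInverse (toAdd y)]
    simp

lemma exists_nonone_twin_Z (hn : 3 ≤ n) (x : Multiplicative (ZMod n)) :
    ∃ y, y ∈ twinClass (powerGraph (Multiplicative (ZMod n))) x ∧ y ≠ 1 := by
  by_cases hx : x = 1
  · subst hx
    refine ⟨ofAdd (1 : ZMod n), Or.inr ?_, by simpa using one_ne_zero_zmod hn⟩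
    rw [neighborSet_one, closed_univ_gen hn]
    ext z; by_cases hz : z = 1 <;> simp [hz]
  · exact ⟨x, mem_twinClass_self x, hx⟩

end Main

/-- `|U(P_{D_{2n}})| = |U(P_{Z_n})| + 2` for `n ≥ 3`. -/
theorem twinClassCount_powerGraph_dihedral (n : ℕ) (hn : 3 ≤ n) :
    twinClassCount (powerGraph (DihedralGroup n)) =
      twinClassCount (powerGraph (Multiplicative (ZMod n))) + 2 := by
  haveI : NeZero n := ⟨by omega⟩
  classical
  set UZ := {S : Set (Multiplicative (ZMod n)) |
    ∃ u, S = twinClass (powerGraph (Multiplicative (ZMod n))) u} with hUZdef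
  set A := twinClass (powerGraph (DihedralGroup n)) 1 with hAdef
  set B := twinClass (powerGraph (DihedralGroup n)) (DihedralGroup.sr 0) with hBdef
  set F : Set (Multiplicative (ZMod n)) → Set (DihedralGroup n) :=
    fun C => iota n '' (C \ {1}) with hFdef
  have hUD : {S : Set (DihedralGroup n) |
      ∃ u, S = twinClass (powerGraph (DihedralGroup n)) u} = insert A (insert B (F '' UZ)) := by
    ext S
    simp only [Set.mem_setOf_eq, Set.mem_insert_iff]
    constructor
    · rintro ⟨u, rfl⟩
      cases u with
      | r i =>
        by_cases hi : i = 0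
        · subst hi
          left
          rw [hAdef, show (DihedralGroup.r (0 : ZMod n)) = (1 : DihedralGroup n)
            from DihedralGroup.one_def.symm]
        · right; right
          exact ⟨twinClass (powerGraph (Multiplicative (ZMod n))) (Multiplicative.ofAdd i),
            ⟨Multiplicative.ofAdd i, rfl⟩, (twinClass_r_dihedral hn hi).symm⟩
      | sr j =>
        right; left
        rw [hBdef, twinClass_sr_dihedral hn, twinClass_sr_dihedral hn]
    · rintro (rfl | rfl | ⟨C, ⟨x, rfl⟩, rfl⟩)
      · exact ⟨1, rfl⟩
      · exact ⟨DihedralGroup.sr 0, rfl⟩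
      · obtain ⟨y, hy, hy1⟩ := exists_nonone_twin_Z hn x
        have hcl : twinClass (powerGraph (Multiplicative (ZMod n))) x =
            twinClass (powerGraph (Multiplicative (ZMod n))) y := twinClass_eq_of_mem hy
        have hj : Multiplicative.toAdd y ≠ 0 := fun h => hy1 (by
          simpa using congrArg Multiplicative.ofAdd h)
        refine ⟨DihedralGroup.r (Multiplicative.toAdd y), ?_⟩
        rw [hcl, twinClass_r_dihedral hn hj]
        simp
        rfl
  have hA1 : A = {1} := twinClass_one_dihedral hn
  have hBmem : DihedralGroup.sr (0 : ZMod n) ∈ B := mem_twinClass_self _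
  have hAB : A ∉ insert B (F '' UZ) := by
    rw [Set.mem_insert_iff]
    rintro (h | ⟨C, -, h⟩)
    · rw [← h, hA1, Set.mem_singleton_iff, DihedralGroup.one_def] at hBmem
      cases hBmem
    · have : (1 : DihedralGroup n) ∈ F C := by rw [h, hA1]; exact Set.mem_singleton _
      obtain ⟨x, ⟨-, hx1⟩, hx⟩ := this
      apply hx1
      rw [DihedralGroup.one_def] at hx
      have : Multiplicative.toAdd x = 0 := DihedralGroup.r.inj hx
      simpa using congrArg Multiplicative.ofAdd this
  have hBF : B ∉ F '' UZ := by
    rintro ⟨C, -, h⟩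
    rw [← h] at hBmem
    obtain ⟨x, -, hx⟩ := hBmem
    cases hx
  have hinj : Set.InjOn F UZ := by
    rintro C₁ ⟨x₁, rfl⟩ C₂ ⟨x₂, rfl⟩ h
    have h' := (Set.image_eq_image iota_injective).1 h
    obtain ⟨y, hy, hy1⟩ := exists_nonone_twin_Z hn x₁
    have hy2 : y ∈ twinClass (powerGraph (Multiplicative (ZMod n))) x₂ := by
      have : y ∈ twinClass (powerGraph (Multiplicative (ZMod n))) x₁ \ {1} := ⟨hy, hy1⟩
      rw [h'] at this
      exact this.1
    rw [twinClass_eq_of_mem hy, twinClass_eq_of_mem hy2]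
  rw [twinClassCount, hUD,
    Set.ncard_insert_of_notMem hAB (Set.toFinite _),
    Set.ncard_insert_of_notMem hBF (Set.toFinite _),
    Set.ncard_image_of_injOn hinj]
  rfl
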